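/- Let g be a Lorentzian symmetric bilinear form of signature (+,-,...,-) on V, let T ∈ V be timelike (g(T,T) > 0), and write a vector w ∈ V in a basis (f₀, T, f₂, ..., f_{n-1}) as w = w⁰f₀ + w¹T + Σⱼ wʲfⱼ, where g(f₀,f₀) = 0, g(fᵢ,fⱼ) = -δᵢⱼ and g(f₀,fⱼ) = 0 for i,j ≥ 2. Then w is timelike if and only if g(T,T)·(w¹)² + 2w¹·(g(T,f₀)w⁰ + Σⱼ g(T,fⱼ)wʲ) - Σⱼ (wʲ)² > 0, and the two connected components of the timelike cone are distinguished by w¹ > 0 and w¹ < 0 among timelike vectors with this property, i.e. every timelike w has w¹ ≠ 0 and w is in the component of T iff w¹ > 0. -/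

import Mathlib

/-- In a basis `(f₀, T, f₂, …, f_{n-1})` with `f₀` null, `T`
timelike, and `f₂, …, f_{n-1}` orthonormal spacelike and `g`-orthogonal to
`f₀`, a vector `w` is timelike iff
`g(T,T)(w¹)² + 2w¹(g(T,f₀)w⁰ + Σⱼ g(T,fⱼ)wʲ) - Σⱼ(wʲ)² > 0`, every timelike `w`
has `w¹ ≠ 0`, and `w` is in the component of `T` iff `w¹ > 0`. -/
theorem timelike_cone_adapted_frame_characterization
    {n : ℕ} (hn : 2 ≤ n) {V : Type*} [NormedAddCommGroup V] [NormedSpace ℝ V]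
    [FiniteDimensional ℝ V]
    (g : V →ₗ[ℝ] V →ₗ[ℝ] ℝ) (hsymm : ∀ x y : V, g x y = g y x)
    (b : Module.Basis (Fin n) ℝ V)
    (hT : 0 < g (b ⟨1, by omega⟩) (b ⟨1, by omega⟩))
    (h00 : g (b ⟨0, by omega⟩) (b ⟨0, by omega⟩) = 0)
    (h0j : ∀ j : Fin n, 2 ≤ (j : ℕ) → g (b ⟨0, by omega⟩) (b j) = 0)
    (hij : ∀ i j : Fin n, 2 ≤ (i : ℕ) → 2 ≤ (j : ℕ) →
      g (b i) (b j) = if i = j then -1 else 0) :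
    ∀ w : V,
      (0 < g w w ↔
        0 < g (b ⟨1, by omega⟩) (b ⟨1, by omega⟩) * (b.repr w ⟨1, by omega⟩) ^ 2 +
          2 * (b.repr w ⟨1, by omega⟩) *
            (g (b ⟨1, by omega⟩) (b ⟨0, by omega⟩) * b.repr w ⟨0, by omega⟩ +
              ∑ j ∈ Finset.univ.filter (fun j : Fin n => 2 ≤ (j : ℕ)),
                g (b ⟨1, by omega⟩) (b j) * b.repr w j) -
          ∑ j ∈ Finset.univ.filter (fun j : Fin n => 2 ≤ (j : ℕ)),
            (b.repr w j) ^ 2) ∧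
      (0 < g w w →
        b.repr w ⟨1, by omega⟩ ≠ 0 ∧
          (w ∈ connectedComponentIn {u : V | 0 < g u u} (b ⟨1, by omega⟩) ↔
            0 < b.repr w ⟨1, by omega⟩)) := by
  set i0 : Fin n := ⟨0, by omega⟩ with hi0def
  set i1 : Fin n := ⟨1, by omega⟩ with hi1def
  set S : Finset (Fin n) := Finset.univ.filter (fun j : Fin n => 2 ≤ (j : ℕ)) with hSdef
  set T : V := b i1 with hTdef
  have hmemS : ∀ j : Fin n, j ∈ S ↔ 2 ≤ (j : ℕ) := by
    intro j; simp [hSdef]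
  have hi1S : i1 ∉ S := by simp [hmemS, hi1def]
  have hi0iS : i0 ∉ insert i1 S := by
    simp only [Finset.mem_insert, hmemS]
    push_neg
    exact ⟨by simp [hi0def, hi1def, Fin.ext_iff], by simp [hi0def]⟩
  have huniv : (Finset.univ : Finset (Fin n)) = insert i0 (insert i1 S) := by
    ext i
    simp only [Finset.mem_univ, true_iff, Finset.mem_insert, hmemS, hi0def, hi1def,
      Fin.ext_iff]
    omega
  -- the key quadratic formula
  have key : ∀ u : V, g u u =
      g T T * (b.repr u i1) ^ 2 +
        2 * (b.repr u i1) *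
          (g T (b i0) * b.repr u i0 + ∑ j ∈ S, g T (b j) * b.repr u j) -
        ∑ j ∈ S, (b.repr u j) ^ 2 := by
    intro u
    have hu : (∑ i : Fin n, b.repr u i • b i) = u := b.sum_repr u
    conv_lhs => rw [← hu]
    simp only [map_sum, map_smul, LinearMap.sum_apply, LinearMap.smul_apply, smul_eq_mul,
      Finset.mul_sum]
    rw [huniv]
    simp only [Finset.sum_insert hi0iS, Finset.sum_insert hi1S]
    have e0j : ∀ j ∈ S, g (b i0) (b j) = 0 := fun j hj => h0j j ((hmemS j).1 hj)
    have ej0 : ∀ j ∈ S, g (b j) (b i0) = 0 := fun j hj => by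
      rw [hsymm]; exact e0j j hj
    have sumA : ∑ i ∈ S, b.repr u i0 * (b.repr u i * g (b i) (b i0)) = 0 := by
      apply Finset.sum_eq_zero
      intro i hi; rw [ej0 i hi]; ring
    have sumB : ∑ i ∈ S, b.repr u i1 * (b.repr u i * g (b i) (b i1)) =
        b.repr u i1 * ∑ j ∈ S, g T (b j) * b.repr u j := by
      rw [Finset.mul_sum]
      apply Finset.sum_congr rfl
      intro i hi
      rw [hsymm (b i) (b i1), ← hTdef]
      ring
    have sum2 : ∀ x ∈ S, ∑ i ∈ S, b.repr u x * (b.repr u i * g (b i) (b x)) =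
        -(b.repr u x) ^ 2 := by
      intro x hx
      have h1 : ∀ i ∈ S, b.repr u x * (b.repr u i * g (b i) (b x)) =
          if x = i then -(b.repr u x * b.repr u i) else 0 := by
        intro i hi
        rw [hij i x ((hmemS i).1 hi) ((hmemS x).1 hx)]
        rcases eq_or_ne x i with h | h
        · subst h; simp
        · simp [h, Ne.symm h]
      rw [Finset.sum_congr rfl h1, Finset.sum_ite_eq S x
        (fun i => -(b.repr u x * b.repr u i))]
      simp [hx]; ring
    have sumC : ∑ x ∈ S,
        (b.repr u x * (b.repr u i0 * g (b i0) (b x)) +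
          (b.repr u x * (b.repr u i1 * g (b i1) (b x)) +
            ∑ i ∈ S, b.repr u x * (b.repr u i * g (b i) (b x)))) =
        ∑ x ∈ S, (b.repr u i1 * (g T (b x) * b.repr u x) - (b.repr u x) ^ 2) := by
      apply Finset.sum_congr rfl
      intro x hx
      rw [e0j x hx, sum2 x hx, ← hTdef]
      ring
    rw [sumA, sumB, sumC, Finset.sum_sub_distrib, ← Finset.mul_sum]
    rw [h00, hsymm (b i0) (b i1), ← hTdef]
    ring
  -- repr of T
  have hreprT : ∀ i : Fin n, b.repr T i = if i1 = i then 1 else 0 := by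
    intro i
    rw [hTdef, b.repr_self]
    simp [Finsupp.single_apply]
  have hreprT1 : b.repr T i1 = 1 := by rw [hreprT]; simp
  -- timelike implies nonzero first coordinate
  have hne : ∀ u : V, 0 < g u u → b.repr u i1 ≠ 0 := by
    intro u hu h0
    rw [key u, h0] at hu
    have : (0:ℝ) ≤ ∑ j ∈ S, (b.repr u j) ^ 2 :=
      Finset.sum_nonneg fun j _ => sq_nonneg _
    nlinarith
  -- continuity of the coordinate
  have hcont : Continuous fun u : V => b.repr u i1 := by
    have := (b.coord i1).continuous_of_finiteDimensional
    exact this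
  intro w
  refine ⟨by rw [key w], fun hw => ⟨hne w hw, ?_⟩⟩
  have hTmem : T ∈ {u : V | 0 < g u u} := hT
  constructor
  · -- membership in component implies positive coordinate
    intro hmem
    by_contra hle
    push_neg at hle
    have hwne := hne w hw
    have hwlt : b.repr w i1 < 0 := lt_of_le_of_ne hle hwne
    have hconn : IsPreconnected (connectedComponentIn {u : V | 0 < g u u} T) :=
      (isPreconnected_connectedComponentIn)
    have hsub : connectedComponentIn {u : V | 0 < g u u} T ⊆ {u : V | 0 < g u u} :=
      connectedComponentIn_subset _ _
    have hTmem' : T ∈ connectedComponentIn {u : V | 0 < g u u} T :=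
      mem_connectedComponentIn hTmem
    have hIcc := hconn.intermediate_value hmem hTmem' (hcont.continuousOn)
    have h0mem : (0:ℝ) ∈ Set.Icc (b.repr w i1) (b.repr T i1) := by
      rw [hreprT1]; exact ⟨hwlt.le, by norm_num⟩
    obtain ⟨u, hu, hu0⟩ := hIcc h0mem
    exact hne u (hsub hu) hu0
  · -- positive coordinate implies membership
    intro hwpos
    set c1 : ℝ := b.repr w i1 with hc1
    set A1 : Set V := segment ℝ T (c1 • T) with hA1
    set A2 : Set V := segment ℝ (c1 • T) w with hA2
    have hA1sub : A1 ⊆ {u : V | 0 < g u u} := by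
      rintro x ⟨a, e, ha, he, hae, rfl⟩
      have : a • T + e • (c1 • T) = (a + e * c1) • T := by
        rw [smul_smul, ← add_smul]
      rw [Set.mem_setOf_eq, this]
      have ht : 0 < a + e * c1 := by
        rcases eq_or_lt_of_le he with h | h
        · have : a = 1 := by linarith
          rw [← h, this]; norm_num
        · nlinarith [mul_pos h hwpos]
      simp only [map_smul, LinearMap.smul_apply, smul_eq_mul]
      exact mul_pos ht (mul_pos ht hT)
    have hA2sub : A2 ⊆ {u : V | 0 < g u u} := by
      rintro x ⟨a, e, ha, he, hae, rfl⟩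
      have hrx : ∀ i : Fin n,
          b.repr (a • (c1 • T) + e • w) i = a * c1 * (if i1 = i then 1 else 0) + e * b.repr w i := by
        intro i
        simp only [map_add, map_smul, Finsupp.add_apply, Finsupp.smul_apply, smul_eq_mul,
          hreprT i]
        ring
      have hx1 : b.repr (a • (c1 • T) + e • w) i1 = c1 := by
        rw [hrx i1, if_pos rfl]
        rw [← hc1, mul_one]
        linear_combination c1 * hae
      have hx0 : b.repr (a • (c1 • T) + e • w) i0 = e * b.repr w i0 := by
        rw [hrx i0]
        have : ¬ (i1 = i0) := by simp [hi0def, hi1def, Fin.ext_iff]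
        simp [this]
      have hxj : ∀ j ∈ S, b.repr (a • (c1 • T) + e • w) j = e * b.repr w j := by
        intro j hj
        rw [hrx j]
        have : ¬ (i1 = j) := by
          intro h; exact hi1S (h ▸ hj)
        simp [this]
      rw [Set.mem_setOf_eq, key]
      have hsum1 : ∑ j ∈ S, g T (b j) * b.repr (a • (c1 • T) + e • w) j =
          e * ∑ j ∈ S, g T (b j) * b.repr w j := by
        rw [Finset.mul_sum]
        exact Finset.sum_congr rfl fun j hj => by rw [hxj j hj]; ring
      have hsum2 : ∑ j ∈ S, (b.repr (a • (c1 • T) + e • w) j) ^ 2 =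
          e ^ 2 * ∑ j ∈ S, (b.repr w j) ^ 2 := by
        rw [Finset.mul_sum]
        exact Finset.sum_congr rfl fun j hj => by rw [hxj j hj]; ring
      rw [hx1, hx0, hsum1, hsum2]
      have hQw : 0 < g T T * c1 ^ 2 +
          2 * c1 * (g T (b i0) * b.repr w i0 + ∑ j ∈ S, g T (b j) * b.repr w j) -
          ∑ j ∈ S, (b.repr w j) ^ 2 := by
        rw [← key w]; exact hw
      have hP : (0:ℝ) ≤ ∑ j ∈ S, (b.repr w j) ^ 2 :=
        Finset.sum_nonneg fun j _ => sq_nonneg _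
      have he1 : e ≤ 1 := by linarith
      have hKpos : 0 < g T T * c1 ^ 2 := mul_pos hT (pow_pos hwpos 2)
      rcases eq_or_lt_of_le he1 with he' | he'
      · rw [he']; nlinarith [hQw]
      · nlinarith [mul_nonneg (mul_nonneg he (by linarith : (0:ℝ) ≤ 1 - e)) hP,
          mul_nonneg he hQw.le,
          mul_pos (by linarith : (0:ℝ) < 1 - e) hKpos]
    have hA1conn : IsPreconnected A1 := (convex_segment _ _).isPreconnected
    have hA2conn : IsPreconnected A2 := (convex_segment _ _).isPreconnected
    have hmid : (c1 • T) ∈ A1 ∩ A2 :=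
      ⟨right_mem_segment _ _ _, left_mem_segment _ _ _⟩
    have hAconn : IsPreconnected (A1 ∪ A2) :=
      IsPreconnected.union (c1 • T) hmid.1 hmid.2 hA1conn hA2conn
    have hTA : T ∈ A1 ∪ A2 := Or.inl (left_mem_segment _ _ _)
    have hsub : A1 ∪ A2 ⊆ {u : V | 0 < g u u} :=
      Set.union_subset hA1sub hA2sub
    have := hAconn.subset_connectedComponentIn hTA hsub
    exact this (Or.inr (right_mem_segment _ _ _))
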